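/- For unit vectors y, z ∈ S¹, the normalized arc-length measure of Q(y) ∩ Q(z) equals 1/2 − (1/π)·arccos|y·z|, where Q(x) = {w ∈ S¹ : |x·w| > √2/2}. -/

import Mathlib

open RealInnerProductSpace MeasureTheory

/-- The normalized arc-length (uniform) probability measure on the unit circle
`S¹ ⊂ ℝ²`, as the pushforward of normalized Lebesgue measure on `[0, 2π)` under
`θ ↦ (cos θ, sin θ)`. -/
noncomputable def circleUnif : Measure (EuclideanSpace ℝ (Fin 2)) :=
  Measure.map (fun θ : ℝ => (!₂[Real.cos θ, Real.sin θ] : EuclideanSpace ℝ (Fin 2)))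
    (ENNReal.ofReal (2 * Real.pi)⁻¹ • volume.restrict (Set.Ico 0 (2 * Real.pi)))

/-- The antipodal quadrants in the direction `x`. -/
def quad (x : EuclideanSpace ℝ (Fin 2)) : Set (EuclideanSpace ℝ (Fin 2)) :=
  {w | |⟪x, w⟫| > Real.sqrt 2 / 2}

open Real Set

namespace Stmt11Aux

lemma inner_eval (y w : EuclideanSpace ℝ (Fin 2)) :
    ⟪y, w⟫ = y 0 * w 0 + y 1 * w 1 := by
  simp [PiLp.inner_apply, RCLike.inner_apply, Fin.sum_univ_two]
  ring

lemma exists_angle (y : EuclideanSpace ℝ (Fin 2)) (hy : ‖y‖ = 1) :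
    ∃ α : ℝ, y 0 = Real.cos α ∧ y 1 = Real.sin α := by
  have h : y 0 ^ 2 + y 1 ^ 2 = 1 := by
    have h1 := hy
    rw [EuclideanSpace.norm_eq, Real.sqrt_eq_one] at h1
    simpa [Fin.sum_univ_two, Real.norm_eq_abs, sq_abs] using h1
  set c : ℂ := ⟨y 0, y 1⟩ with hc
  have habs : ‖c‖ = 1 := by
    rw [Complex.norm_def, Complex.normSq_mk, Real.sqrt_eq_one]
    nlinarith
  have hc0 : c ≠ 0 := by
    intro h0
    rw [h0] at habs
    simp at habs
  refine ⟨Complex.arg c, ?_, ?_⟩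
  · rw [Complex.cos_arg hc0, habs]
    simp [hc]
  · rw [Complex.sin_arg, habs]
    simp [hc]

lemma hper : Function.Periodic (fun x : ℝ => |Real.cos x|) π := fun x => by
  simp [Real.cos_add_pi]

lemma abs_cos_char {w : ℝ} :
    Real.sqrt 2 / 2 < |Real.cos w| ↔ ∃ k : ℤ, |w - k * π| < π / 4 := by
  have hπ := Real.pi_pos
  constructor
  · intro h
    obtain ⟨k, h1⟩ : ∃ k : ℤ, |w / π - k| ≤ 1 / 2 := ⟨round (w / π), abs_sub_round (w / π)⟩
    have hr : |w - k * π| ≤ π / 2 := by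
      have heq : (w / π - k) * π = w - k * π := by field_simp
      have h2 : |w - k * π| = |w / π - k| * π := by
        rw [← heq, abs_mul, abs_of_pos hπ]
      rw [h2]
      nlinarith [abs_nonneg (w / π - (k : ℝ))]
    obtain ⟨hr1, hr2⟩ := abs_le.1 hr
    have hnn : 0 ≤ Real.cos (w - k * π) :=
      Real.cos_nonneg_of_mem_Icc ⟨by linarith, hr2⟩
    have hcos : |Real.cos w| = Real.cos |w - k * π| := by
      rw [← hper.sub_int_mul_eq (x := w) k]
      show |Real.cos (w - k * π)| = _
      rw [abs_of_nonneg hnn, ← Real.cos_abs]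
    rw [hcos, ← Real.cos_pi_div_four] at h
    refine ⟨k, ?_⟩
    by_contra hcon
    push_neg at hcon
    have hle : Real.cos |w - k * π| ≤ Real.cos (π / 4) :=
      Real.cos_le_cos_of_nonneg_of_le_pi (by positivity) (by linarith) hcon
    linarith
  · rintro ⟨k, hk⟩
    have h2 : |Real.cos (w - k * π)| = |Real.cos w| := hper.sub_int_mul_eq k
    have hlt : Real.cos (π / 4) < Real.cos |w - k * π| :=
      Real.cos_lt_cos_of_nonneg_of_le_pi (abs_nonneg _) (by linarith) hk
    have h3 : Real.cos |w - k * π| = Real.cos (w - k * π) := Real.cos_abs _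
    have h4 : Real.cos (w - k * π) ≤ |Real.cos (w - k * π)| := le_abs_self _
    rw [Real.cos_pi_div_four] at hlt
    rw [← h2]
    linarith

lemma core {e' : ℝ} (he : |e'| ≤ π / 2) (s : ℝ) :
    ((∃ k : ℤ, |s - k * π| < π / 4) ∧ (∃ k : ℤ, |s - e' - k * π| < π / 4) ∧
      s ∈ Set.Ioc (-(π / 4)) (7 * π / 4))
    ↔ (s ∈ Set.Ioo (max (-(π / 4)) (e' - π / 4)) (min (π / 4) (e' + π / 4)) ∨
       s ∈ Set.Ioo (max (3 * π / 4) (e' + 3 * π / 4)) (min (5 * π / 4) (e' + 5 * π / 4))) := by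
  have hπ := Real.pi_pos
  obtain ⟨he1, he2⟩ := abs_le.1 he
  constructor
  · rintro ⟨⟨k₁, h1⟩, ⟨k₂, h2⟩, hs1, hs2⟩
    obtain ⟨h1a, h1b⟩ := abs_lt.1 h1
    obtain ⟨h2a, h2b⟩ := abs_lt.1 h2
    have hkeq : k₂ = k₁ := by
      have hb1 : ((k₂ - k₁ : ℤ) : ℝ) * π < π := by push_cast; nlinarith
      have hb2 : -π < ((k₂ - k₁ : ℤ) : ℝ) * π := by push_cast; nlinarith
      have h0 : k₂ - k₁ = 0 := by
        by_contra hne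
        rcases lt_or_gt_of_ne hne with h | h
        · have : ((k₂ - k₁ : ℤ) : ℝ) ≤ -1 := by exact_mod_cast (by omega : k₂ - k₁ ≤ -1)
          nlinarith
        · have : (1 : ℝ) ≤ ((k₂ - k₁ : ℤ) : ℝ) := by exact_mod_cast (by omega : 1 ≤ k₂ - k₁)
          nlinarith
      omega
    subst hkeq
    have hk1l : (0 : ℤ) ≤ k₂ := by
      by_contra hneg
      push_neg at hneg
      have : ((k₂ : ℤ) : ℝ) ≤ -1 := by exact_mod_cast (by omega : k₂ ≤ -1)
      nlinarith
    have hk1u : k₂ ≤ 1 := by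
      by_contra hgt
      push_neg at hgt
      have : (2 : ℝ) ≤ ((k₂ : ℤ) : ℝ) := by exact_mod_cast (by omega : 2 ≤ k₂)
      nlinarith
    interval_cases k₂
    · left
      simp only [Int.cast_zero, zero_mul, sub_zero] at h1a h1b h2a h2b
      exact ⟨max_lt (by linarith) (by linarith), lt_min (by linarith) (by linarith)⟩
    · right
      simp only [Int.cast_one, one_mul] at h1a h1b h2a h2b
      exact ⟨max_lt (by linarith) (by linarith), lt_min (by linarith) (by linarith)⟩
  · rintro (hs | hs)
    · obtain ⟨hl, hr⟩ := hs
      obtain ⟨hl1, hl2⟩ := max_lt_iff.1 hl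
      obtain ⟨hr1, hr2⟩ := lt_min_iff.1 hr
      refine ⟨⟨0, ?_⟩, ⟨0, ?_⟩, by linarith, by linarith⟩
      · rw [abs_lt]; push_cast; constructor <;> linarith
      · rw [abs_lt]; push_cast; constructor <;> linarith
    · obtain ⟨hl, hr⟩ := hs
      obtain ⟨hl1, hl2⟩ := max_lt_iff.1 hl
      obtain ⟨hr1, hr2⟩ := lt_min_iff.1 hr
      refine ⟨⟨1, ?_⟩, ⟨1, ?_⟩, by linarith, by linarith⟩
      · rw [abs_lt]; push_cast; constructor <;> linarith
      · rw [abs_lt]; push_cast; constructor <;> linarith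

end Stmt11Aux

open Stmt11Aux

theorem stmt_11 (y z : EuclideanSpace ℝ (Fin 2)) (hy : ‖y‖ = 1) (hz : ‖z‖ = 1) :
    (circleUnif (quad y ∩ quad z)).toReal = 1 / 2 - (1 / Real.pi) * Real.arccos |⟪y, z⟫| := by
  have hπ := Real.pi_pos
  obtain ⟨α, hy0, hy1⟩ := exists_angle y hy
  obtain ⟨β, hz0, hz1⟩ := exists_angle z hz
  set f : ℝ → EuclideanSpace ℝ (Fin 2) :=
    fun θ : ℝ => (!₂[Real.cos θ, Real.sin θ] : EuclideanSpace ℝ (Fin 2)) with hf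
  have hfm : Measurable f := by
    apply (PiLp.continuous_toLp 2 _).measurable.comp
    apply measurable_pi_lambda
    intro i
    fin_cases i
    · simpa [hf] using Real.measurable_cos
    · simpa [hf] using Real.measurable_sin
  have hquad_meas : ∀ x, MeasurableSet (quad x) := by
    intro x
    have hop : IsOpen (quad x) := by
      have hc : Continuous fun w : EuclideanSpace ℝ (Fin 2) => |⟪x, w⟫| :=
        (Continuous.inner continuous_const continuous_id).abs
      exact isOpen_lt continuous_const hc
    exact hop.measurableSet
  set S := quad y ∩ quad z with hSdef
  have hS : MeasurableSet S := (hquad_meas y).inter (hquad_meas z)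
  set e : ℝ := β - α with hedef
  set m : ℤ := round (e / π) with hmdef
  set e' : ℝ := e - m * π with he'def
  have he'le : |e'| ≤ π / 2 := by
    have h1 : |e / π - m| ≤ 1 / 2 := abs_sub_round (e / π)
    have heq : (e / π - m) * π = e' := by rw [he'def]; field_simp
    have h2 : |e'| = |e / π - m| * π := by
      rw [← heq, abs_mul, abs_of_pos hπ]
    rw [h2]
    nlinarith [abs_nonneg (e / π - (m : ℝ))]
  set d : ℝ := |e'| with hddef
  have hdnn : 0 ≤ d := abs_nonneg _
  have hdle : d ≤ π / 2 := he'le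
  -- inner products along the circle
  have hyw : ∀ θ : ℝ, ⟪y, f θ⟫ = Real.cos (θ - α) := by
    intro θ
    rw [inner_eval]
    simp only [hf, PiLp.toLp_apply, Matrix.cons_val_zero, Matrix.cons_val_one, Matrix.head_cons]
    rw [hy0, hy1, Real.cos_sub]
    ring
  have hzw : ∀ θ : ℝ, ⟪z, f θ⟫ = Real.cos (θ - β) := by
    intro θ
    rw [inner_eval]
    simp only [hf, PiLp.toLp_apply, Matrix.cons_val_zero, Matrix.cons_val_one, Matrix.head_cons]
    rw [hz0, hz1, Real.cos_sub]
    ring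
  -- the preimage set
  have hE : f ⁻¹' S = {θ : ℝ | (∃ k : ℤ, |θ - α - k * π| < π / 4) ∧
      (∃ k : ℤ, |θ - α - e' - k * π| < π / 4)} := by
    ext θ
    simp only [Set.mem_preimage, hSdef, Set.mem_inter_iff, quad, Set.mem_setOf_eq, gt_iff_lt]
    have hcb : |Real.cos (θ - β)| = |Real.cos (θ - α - e')| := by
      have hθ : θ - β = θ - α - e' - m * π := by rw [he'def, hedef]; ring
      rw [hθ]
      exact hper.sub_int_mul_eq m
    rw [hyw, hzw, hcb, abs_cos_char, abs_cos_char]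
  have hEmeas : MeasurableSet (f ⁻¹' S) := hfm hS
  -- invariance under 2π translations
  have hEinv : ∀ g : AddSubgroup.zmultiples (2 * π),
      (fun x : ℝ => (g : ℝ) +ᵥ x) ⁻¹' (f ⁻¹' S) = f ⁻¹' S := by
    intro g
    obtain ⟨n, hn⟩ := g.2
    have hg : (g : ℝ) = n * (2 * π) := by rw [← hn]; simp [zsmul_eq_mul]
    ext θ
    simp only [Set.mem_preimage, vadd_eq_add]
    have hcos : Real.cos ((g : ℝ) + θ) = Real.cos θ := by
      rw [hg, add_comm]
      exact Real.cos_add_int_mul_two_pi θ n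
    have hsin : Real.sin ((g : ℝ) + θ) = Real.sin θ := by
      rw [hg, add_comm]
      exact Real.sin_add_int_mul_two_pi θ n
    have hff : f ((g : ℝ) + θ) = f θ := by
      simp only [hf]
      rw [hcos, hsin]
    rw [hff]
  -- shift the fundamental domain
  have h2π : (0 : ℝ) < 2 * π := by positivity
  have hfd0 := isAddFundamentalDomain_Ioc h2π 0 volume
  have hfd1 := isAddFundamentalDomain_Ioc h2π (α - π / 4) volume
  have hshift : volume (f ⁻¹' S ∩ Ioc 0 (0 + 2 * π)) =
      volume (f ⁻¹' S ∩ Ioc (α - π / 4) (α - π / 4 + 2 * π)) :=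
    hfd0.measure_set_eq hfd1 hEmeas hEinv
  have hIcoIoc : volume (f ⁻¹' S ∩ Ico 0 (2 * π)) = volume (f ⁻¹' S ∩ Ioc 0 (2 * π)) :=
    measure_congr ((Filter.EventuallyEq.refl _ _).inter Ico_ae_eq_Ioc)
  -- explicit description in the shifted window
  set a1 : ℝ := α + max (-(π / 4)) (e' - π / 4) with ha1
  set b1 : ℝ := α + min (π / 4) (e' + π / 4) with hb1
  set a2 : ℝ := α + max (3 * π / 4) (e' + 3 * π / 4) with ha2
  set b2 : ℝ := α + min (5 * π / 4) (e' + 5 * π / 4) with hb2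
  have hset : f ⁻¹' S ∩ Ioc (α - π / 4) (α - π / 4 + 2 * π) = Ioo a1 b1 ∪ Ioo a2 b2 := by
    ext θ
    rw [hE]
    have hcore := core he'le (θ - α)
    simp only [Set.mem_Ioo, Set.mem_Ioc, Set.mem_union] at hcore
    simp only [Set.mem_inter_iff, Set.mem_setOf_eq, Set.mem_Ioc, Set.mem_union, Set.mem_Ioo,
      ha1, hb1, ha2, hb2]
    constructor
    · rintro ⟨⟨hA, hB⟩, hW1, hW2⟩
      rcases hcore.mp ⟨hA, hB, by linarith, by linarith⟩ with ⟨h1, h2⟩ | ⟨h1, h2⟩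
      · exact Or.inl ⟨by linarith, by linarith⟩
      · exact Or.inr ⟨by linarith, by linarith⟩
    · intro h
      have hmem : (max (-(π / 4)) (e' - π / 4) < θ - α ∧ θ - α < min (π / 4) (e' + π / 4)) ∨
          (max (3 * π / 4) (e' + 3 * π / 4) < θ - α ∧
            θ - α < min (5 * π / 4) (e' + 5 * π / 4)) := by
        rcases h with ⟨h1, h2⟩ | ⟨h1, h2⟩
        · exact Or.inl ⟨by linarith, by linarith⟩
        · exact Or.inr ⟨by linarith, by linarith⟩
      obtain ⟨hA, hB, hW1, hW2⟩ := hcore.mpr hmem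
      exact ⟨⟨hA, hB⟩, by linarith, by linarith⟩
  -- lengths
  have hd1 : b1 - a1 = π / 2 - d := by
    rw [ha1, hb1, hddef]
    rcases abs_cases e' with ⟨h1, h2⟩ | ⟨h1, h2⟩
    · rw [h1, min_eq_left (by linarith), max_eq_right (by linarith)]; ring
    · rw [h1, min_eq_right (by linarith), max_eq_left (by linarith)]; ring
  have hd2 : b2 - a2 = π / 2 - d := by
    rw [ha2, hb2, hddef]
    rcases abs_cases e' with ⟨h1, h2⟩ | ⟨h1, h2⟩
    · rw [h1, min_eq_left (by linarith), max_eq_right (by linarith)]; ring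
    · rw [h1, min_eq_right (by linarith), max_eq_left (by linarith)]; ring
  have hdisj : Disjoint (Ioo a1 b1) (Ioo a2 b2) := by
    rw [Set.disjoint_left]
    intro x hx1 hx2
    have h1 : x < b1 := hx1.2
    have h2 : a2 < x := hx2.1
    have h3 : b1 ≤ α + π / 4 := by rw [hb1]; exact add_le_add_right (min_le_left _ _) α
    have h4 : α + 3 * π / 4 ≤ a2 := by rw [ha2]; exact add_le_add_right (le_max_left _ _) α
    have h5 : x < α + π / 4 := lt_of_lt_of_le h1 h3
    have h6 : α + 3 * π / 4 < x := lt_of_le_of_lt h4 h2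
    nlinarith [Real.pi_pos]
  have hvol : volume (Ioo a1 b1 ∪ Ioo a2 b2) = ENNReal.ofReal (π - 2 * d) := by
    rw [measure_union hdisj measurableSet_Ioo, Real.volume_Ioo, Real.volume_Ioo, hd1, hd2,
      ← ENNReal.ofReal_add (by linarith) (by linarith)]
    congr 1
    ring
  -- compute the measure
  have hmap : circleUnif S = ENNReal.ofReal (2 * π)⁻¹ * ENNReal.ofReal (π - 2 * d) := by
    have hcu : circleUnif = Measure.map f
        (ENNReal.ofReal (2 * Real.pi)⁻¹ • volume.restrict (Set.Ico 0 (2 * Real.pi))) := rfl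
    rw [hcu, Measure.map_apply hfm hS, Measure.smul_apply, Measure.restrict_apply hEmeas,
      smul_eq_mul]
    congr 1
    rw [zero_add] at hshift
    rw [hIcoIoc, hshift, hset, hvol]
  -- the arccos identity
  have hinner : ⟪y, z⟫ = Real.cos e := by
    rw [inner_eval, hy0, hy1, hz0, hz1, hedef, Real.cos_sub]
    ring
  have habs2 : |⟪y, z⟫| = Real.cos d := by
    rw [hinner]
    have h1 : |Real.cos e| = |Real.cos e'| := by
      rw [he'def]
      exact (hper.sub_int_mul_eq m).symm
    have h2 : 0 ≤ Real.cos e' := by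
      obtain ⟨ha, hb⟩ := abs_le.1 he'le
      exact Real.cos_nonneg_of_mem_Icc ⟨by linarith, hb⟩
    rw [h1, abs_of_nonneg h2, hddef, Real.cos_abs]
  have harccos : Real.arccos |⟪y, z⟫| = d := by
    rw [habs2, Real.arccos_cos hdnn (by linarith)]
  rw [← hSdef] at *
  rw [hmap, harccos, ENNReal.toReal_mul, ENNReal.toReal_ofReal (by positivity),
    ENNReal.toReal_ofReal (by linarith)]
  field_simp
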